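/- For every real s > 1, the supremum over all integers N ≥ 2 of the Witten zeta value ζ_{SU(N)}(s) = Σ_λ d_λ^{−s} is finite, where the sum is over all nonincreasing tuples λ = (λ₁ ≥ … ≥ λ_N) of nonnegative integers with λ_N = 0, and d_λ = ∏_{1≤i<j≤N} (λ_i − λ_j + j − i)/(j − i). -/

import Mathlib

/-- The Weyl dimension of a nonincreasing tuple `λ ∈ ℤ^N`:
`d_λ = ∏_{1 ≤ i < j ≤ N} (λ_i − λ_j + j − i)/(j − i)`. -/
def weylDim (N : ℕ) (l : Fin N → ℤ) : ℚ :=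
  ∏ p ∈ Finset.univ.filter (fun p : Fin N × Fin N => p.1 < p.2),
    (((l p.1 : ℚ) - (l p.2 : ℚ) + ((p.2 : ℕ) : ℚ) - ((p.1 : ℕ) : ℚ)) /
      (((p.2 : ℕ) : ℚ) - ((p.1 : ℕ) : ℚ)))

/-- The highest weights of `SU(N)`: nonincreasing tuples of nonnegative integers whose last
entry vanishes. -/
def SUWeight (N : ℕ) : Set (Fin N → ℤ) :=
  {l | (∀ i j : Fin N, i ≤ j → l j ≤ l i) ∧ (∀ i : Fin N, 0 ≤ l i) ∧
    ∀ h : N - 1 < N, l ⟨N - 1, h⟩ = 0}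

/-- The Witten zeta function of `SU(N)`: `ζ_{SU(N)}(s) = Σ_λ d_λ^{−s}`, summing over all
highest weights of `SU(N)`, with values in `[0,∞]`. -/
noncomputable def suZeta (N : ℕ) (s : ℝ) : ENNReal :=
  ∑' l : SUWeight N, ENNReal.ofReal ((weylDim N l.1 : ℝ) ^ (-s))

open Finset

lemma factor_ge_one {N : ℕ} (l : Fin N → ℤ) (hmono : ∀ i j : Fin N, i ≤ j → l j ≤ l i)
    {p : Fin N × Fin N} (hp : p.1 < p.2) :
    1 ≤ ((l p.1 : ℚ) - (l p.2 : ℚ) + ((p.2 : ℕ) : ℚ) - ((p.1 : ℕ) : ℚ)) /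
      (((p.2 : ℕ) : ℚ) - ((p.1 : ℕ) : ℚ)) := by
  have hlt : ((p.1 : ℕ) : ℚ) < ((p.2 : ℕ) : ℚ) := by
    exact_mod_cast (Fin.lt_iff_val_lt_val.mp hp)
  have hd : (0:ℚ) < ((p.2 : ℕ) : ℚ) - ((p.1 : ℕ) : ℚ) := by linarith
  rw [le_div_iff₀ hd]
  have hm : (l p.2 : ℚ) ≤ (l p.1 : ℚ) := by exact_mod_cast hmono p.1 p.2 hp.le
  linarith

lemma one_le_weylDim {N : ℕ} (l : Fin N → ℤ) (hmono : ∀ i j : Fin N, i ≤ j → l j ≤ l i) :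
    1 ≤ weylDim N l := by
  unfold weylDim
  calc (1:ℚ) = ∏ _p ∈ Finset.univ.filter (fun p : Fin N × Fin N => p.1 < p.2), (1:ℚ) :=
        (Finset.prod_const_one).symm
    _ ≤ _ := Finset.prod_le_prod (fun _ _ => zero_le_one)
        (fun p hp => factor_ge_one l hmono (Finset.mem_filter.mp hp).2)

lemma weylDim_zero (N : ℕ) : weylDim N (fun _ => 0) = 1 := by
  refine Finset.prod_eq_one fun p hp => ?_
  have hp' := (mem_filter.mp hp).2
  have hlt : ((p.1 : ℕ) : ℚ) < ((p.2 : ℕ) : ℚ) := by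
    exact_mod_cast (Fin.lt_iff_val_lt_val.mp hp')
  have hd : ((p.2 : ℕ) : ℚ) - ((p.1 : ℕ) : ℚ) ≠ 0 := by linarith
  push_cast
  rw [sub_self, zero_add, div_self hd]

lemma tele (k : ℕ) : ∏ d ∈ Finset.range k, (((d:ℚ)+3)/((d:ℚ)+2)) = ((k:ℚ)+2)/2 := by
  induction k with
  | zero => norm_num
  | succ n ih =>
    rw [Finset.prod_range_succ, ih]
    have h2 : (n:ℚ) + 2 ≠ 0 := by positivity
    push_cast
    field_simp
    ring

lemma zero_mem_SUWeight (N : ℕ) : (fun _ => 0 : Fin N → ℤ) ∈ SUWeight N :=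
  ⟨fun _ _ _ => le_rfl, fun _ => le_rfl, fun _ => rfl⟩

lemma SUWeight.decomp {N : ℕ} {l : Fin N → ℤ} (hl : l ∈ SUWeight N)
    (hne : l ≠ fun _ => 0) :
    ∃ L : ℕ, 1 ≤ L ∧ L < N ∧ (∀ i : Fin N, (i:ℕ) < L → 1 ≤ l i) ∧
      (∀ i : Fin N, L ≤ (i:ℕ) → l i = 0) := by
  obtain ⟨hmono, hnn, hlast⟩ := hl
  have hN : 0 < N := by
    rcases Nat.eq_zero_or_pos N with h | h
    · subst h; exact absurd (funext fun i => i.elim0) hne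
    · exact h
  have hPex : ∃ k, ∃ hk : k < N, l ⟨k, hk⟩ = 0 :=
    ⟨N - 1, Nat.sub_lt hN one_pos, hlast _⟩
  classical
  set L := Nat.find hPex with hLdef
  obtain ⟨hLN, hLz⟩ := Nat.find_spec hPex
  have hzero : ∀ i : Fin N, L ≤ (i:ℕ) → l i = 0 := by
    intro i hi
    have h1 : l i ≤ l ⟨L, hLN⟩ := hmono ⟨L, hLN⟩ i hi
    have h2 : (0:ℤ) ≤ l i := hnn i
    rw [hLz] at h1
    omega
  have hpos : ∀ i : Fin N, (i:ℕ) < L → 1 ≤ l i := by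
    intro i hi
    have hne' := Nat.find_min hPex hi
    push_neg at hne'
    have : l ⟨(i:ℕ), i.isLt⟩ ≠ 0 := hne' i.isLt
    rw [Fin.eta] at this
    have := hnn i
    omega
  have hL1 : 1 ≤ L := by
    by_contra h
    have hL0 : L = 0 := by omega
    exact hne (funext fun i => hzero i (by omega))
  refine ⟨L, hL1, ?_, hpos, hzero⟩
  ·
    exact hLN


lemma weylDim_key {N L : ℕ} (l : Fin N → ℤ)
    (hmono : ∀ i j : Fin N, i ≤ j → l j ≤ l i)
    (hL1 : 1 ≤ L) (hLN : L < N)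
    (hpos : ∀ i : Fin N, (i : ℕ) < L → 1 ≤ l i)
    (hzero : ∀ i : Fin N, L ≤ (i : ℕ) → l i = 0) :
    weylDim L (fun i : Fin L => l (Fin.castLE hLN.le i) - l ⟨L - 1, by omega⟩)
      * (((l ⟨L - 1, by omega⟩ : ℤ) : ℚ) + 1)
      * (((L:ℚ) + 1) * ((N:ℚ) - (L:ℚ) + 1) / 4)
      ≤ weylDim N l := by
  classical
  have hjIlt : L - 1 < N := by omega
  set jI : Fin N := ⟨L - 1, hjIlt⟩ with hjI
  set jv : ℤ := l jI with hjvdef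
  have hjv1 : 1 ≤ jv := hpos jI (by simp only [hjI]; omega)
  set l'' : Fin L → ℤ := fun i : Fin L => l (Fin.castLE hLN.le i) - jv with hl''
  set F : Fin N × Fin N → ℚ := fun p =>
    (((l p.1 : ℤ) : ℚ) - ((l p.2 : ℤ) : ℚ) + ((p.2 : ℕ) : ℚ) - ((p.1 : ℕ) : ℚ)) /
      (((p.2 : ℕ) : ℚ) - ((p.1 : ℕ) : ℚ)) with hF
  set P : Finset (Fin N × Fin N) := Finset.univ.filter (fun p => p.1 < p.2) with hP
  set T1 : Finset (Fin N × Fin N) := P.filter (fun p => ((p.2 : ℕ) < L)) with hT1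
  set T2 : Finset (Fin N × Fin N) :=
    (Finset.univ : Finset (Fin (L-1))).image
      (fun d : Fin (L-1) => ((⟨L - 2 - (d:ℕ), by omega⟩ : Fin N), (⟨L, hLN⟩ : Fin N))) with hT2
  set T3 : Finset (Fin N × Fin N) :=
    (Finset.univ : Finset (Fin (N-L))).image
      (fun k : Fin (N-L) => (jI, (⟨L + (k:ℕ), by have := k.isLt; omega⟩ : Fin N))) with hT3
  -- all factors on P are ≥ 1
  have hFone : ∀ p ∈ P, 1 ≤ F p := by
    intro p hp
    exact factor_ge_one l hmono (Finset.mem_filter.mp hp).2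
  -- T1 product
  have hprod1 : ∏ p ∈ T1, F p = weylDim L l'' := by
    unfold weylDim
    refine Finset.prod_bij'
      (fun p hp => ((⟨p.1.1, by
          have h := Finset.mem_filter.mp hp
          have h2 : p.1 < p.2 := (Finset.mem_filter.mp h.1).2
          have h3 : (p.1 : ℕ) < (p.2 : ℕ) := h2
          omega⟩ : Fin L),
        (⟨p.2.1, (Finset.mem_filter.mp hp).2⟩ : Fin L)))
      (fun q _hq => (Fin.castLE hLN.le q.1, Fin.castLE hLN.le q.2))
      ?_ ?_ ?_ ?_ ?_
    · intro p hp
      have h := Finset.mem_filter.mp hp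
      have h2 : p.1 < p.2 := (Finset.mem_filter.mp h.1).2
      simp only [Finset.mem_filter, Finset.mem_univ, true_and]
      exact h2
    · intro q hq
      have h2 : q.1 < q.2 := (Finset.mem_filter.mp hq).2
      simp only [hT1, hP, Finset.mem_filter, Finset.mem_univ, true_and]
      constructor
      · exact h2
      · exact q.2.isLt
    · intro p hp
      ext <;> rfl
    · intro q hq
      ext <;> rfl
    · intro p hp
      simp only [hF, hl'']
      congr 1
      have e1 : Fin.castLE hLN.le (⟨p.1.1, by
          have h := Finset.mem_filter.mp hp
          have h2 : p.1 < p.2 := (Finset.mem_filter.mp h.1).2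
          have h3 : (p.1 : ℕ) < (p.2 : ℕ) := h2
          omega⟩ : Fin L) = p.1 := rfl
      have e2 : Fin.castLE hLN.le (⟨p.2.1, (Finset.mem_filter.mp hp).2⟩ : Fin L) = p.2 := rfl
      rw [e1, e2]
      push_cast
      ring
  -- T2 product
  have hinj2 : Set.InjOn (fun d : Fin (L-1) => ((⟨L - 2 - (d:ℕ), by omega⟩ : Fin N), (⟨L, hLN⟩ : Fin N)))
      (Finset.univ : Finset (Fin (L-1))) := by
    intro a _ b _ hab
    have h1 : L - 2 - (a:ℕ) = L - 2 - (b:ℕ) := congrArg (fun p => (p.1 : ℕ)) hab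
    have ha := a.isLt
    have hb := b.isLt
    exact Fin.ext (by omega)
  have hprod2 : ((L:ℚ) + 1)/2 ≤ ∏ p ∈ T2, F p := by
    rw [hT2, Finset.prod_image hinj2]
    have hstep : ∀ d : Fin (L-1), ((d:ℚ)+3)/((d:ℚ)+2) ≤
        F ((⟨L - 2 - (d:ℕ), by omega⟩ : Fin N), (⟨L, hLN⟩ : Fin N)) := by
      intro d
      have hd := d.isLt
      have hnat : (L - 2 - (d:ℕ)) + ((d:ℕ) + 2) = L := by omega
      have hq : ((L - 2 - (d:ℕ) : ℕ) : ℚ) + ((d:ℚ) + 2) = (L:ℚ) := by exact_mod_cast hnat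
      have hz : l (⟨L, hLN⟩ : Fin N) = 0 := hzero _ (by simp)
      have hx : 1 ≤ l (⟨L - 2 - (d:ℕ), by omega⟩ : Fin N) := hpos _ (by simp; omega)
      have hxq : 1 ≤ ((l (⟨L - 2 - (d:ℕ), by omega⟩ : Fin N) : ℤ) : ℚ) := by exact_mod_cast hx
      simp only [hF, hz]
      have hc1 : ((((⟨L, hLN⟩ : Fin N) : ℕ)) : ℚ) = (L:ℚ) := by norm_num
      have hc2 : ((((⟨L - 2 - (d:ℕ), by omega⟩ : Fin N) : ℕ)) : ℚ) = ((L - 2 - (d:ℕ) : ℕ) : ℚ) := by norm_num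
      rw [hc1, hc2]
      have hden : (L:ℚ) - ((L - 2 - (d:ℕ) : ℕ) : ℚ) = (d:ℚ) + 2 := by linarith
      rw [hden]
      push_cast
      rw [div_le_div_iff₀ (by positivity) (by positivity)]
      nlinarith [hxq]
    calc ((L:ℚ)+1)/2 = ∏ d ∈ Finset.range (L-1), (((d:ℚ)+3)/((d:ℚ)+2)) := by
          rw [tele (L-1)]
          have : ((L - 1 : ℕ) : ℚ) = (L:ℚ) - 1 := by
            have := hL1; push_cast [Nat.cast_sub hL1]; ring
          rw [this]; ring
      _ = ∏ d : Fin (L-1), (((d:ℚ)+3)/((d:ℚ)+2)) :=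
          (Fin.prod_univ_eq_prod_range (fun d : ℕ => ((d:ℚ)+3)/((d:ℚ)+2)) (L-1)).symm
      _ ≤ _ := Finset.prod_le_prod (fun d _ => by positivity) (fun d _ => hstep d)
  -- T3 product
  have hinj3 : Set.InjOn (fun k : Fin (N-L) => (jI, (⟨L + (k:ℕ), by have := k.isLt; omega⟩ : Fin N)))
      (Finset.univ : Finset (Fin (N-L))) := by
    intro a _ b _ hab
    have h1 : L + (a:ℕ) = L + (b:ℕ) := congrArg (fun p => (p.2 : ℕ)) hab
    exact Fin.ext (by omega)
  have hprod3 : ((jv:ℚ) + 1) * (((N:ℚ) - (L:ℚ) + 1)/2) ≤ ∏ p ∈ T3, F p := by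
    rw [hT3, Finset.prod_image hinj3]
    have hstep : ∀ k : Fin (N-L),
        F (jI, (⟨L + (k:ℕ), by have := k.isLt; omega⟩ : Fin N)) =
          ((jv:ℚ) + ((k:ℚ) + 1)) / ((k:ℚ) + 1) := by
      intro k
      have hk := k.isLt
      have hz : l (⟨L + (k:ℕ), by omega⟩ : Fin N) = 0 := hzero _ (by simp)
      simp only [hF, hz, hjI]
      have hc1 : ((((⟨L + (k:ℕ), by omega⟩ : Fin N) : ℕ)) : ℚ) = (L:ℚ) + (k:ℚ) := by push_cast; norm_num
      have hc2 : ((((⟨L - 1, hjIlt⟩ : Fin N) : ℕ)) : ℚ) = (L:ℚ) - 1 := by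
        have : ((L - 1 : ℕ) : ℚ) = (L:ℚ) - 1 := by push_cast [Nat.cast_sub hL1]; ring
        simpa using this
      rw [hc1, hc2, ← hjvdef]
      have hden : (L:ℚ) + (k:ℚ) - ((L:ℚ) - 1) = (k:ℚ) + 1 := by ring
      rw [hden]
      congr 1
      push_cast
      ring
    have hconv : ∏ k : Fin (N-L), (((jv:ℚ) + ((k:ℚ) + 1)) / ((k:ℚ) + 1)) =
        ∏ k ∈ Finset.range (N-L), (((jv:ℚ) + ((k:ℚ) + 1)) / ((k:ℚ) + 1)) :=
      Fin.prod_univ_eq_prod_range (fun k : ℕ => ((jv:ℚ) + ((k:ℚ) + 1)) / ((k:ℚ) + 1)) (N-L)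
    calc ((jv:ℚ) + 1) * (((N:ℚ) - (L:ℚ) + 1)/2)
        ≤ ∏ k ∈ Finset.range (N-L), (((jv:ℚ) + ((k:ℚ) + 1)) / ((k:ℚ) + 1)) := by
          have hNL : N - L = (N - L - 1) + 1 := by omega
          rw [hNL, Finset.prod_range_succ']
          have h0 : ((jv:ℚ) + ((0:ℕ):ℚ) + 1) / (((0:ℕ):ℚ) + 1) = (jv:ℚ) + 1 := by norm_num
          have hrest : ((N:ℚ) - (L:ℚ) + 1)/2 ≤
              ∏ k ∈ Finset.range (N - L - 1), (((jv:ℚ) + (((k+1:ℕ)):ℚ) + 1) / ((((k+1:ℕ)):ℚ) + 1)) := by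
            have : ((N:ℚ) - (L:ℚ) + 1)/2 = (((N - L - 1 : ℕ):ℚ) + 2)/2 := by
              have : ((N - L - 1 : ℕ) : ℚ) = (N:ℚ) - (L:ℚ) - 1 := by
                have h1 : (N - L - 1) + (L + 1) = N := by omega
                have := congrArg (fun n : ℕ => (n : ℚ)) h1
                push_cast at this
                linarith
              rw [this]; ring
            rw [this, ← tele (N - L - 1)]
            refine Finset.prod_le_prod (fun d _ => by positivity) (fun d _ => ?_)
            have hjq : 1 ≤ (jv:ℚ) := by exact_mod_cast hjv1
            rw [div_le_div_iff₀ (by positivity) (by positivity)]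
            push_cast
            nlinarith [hjq]
          calc ((jv:ℚ) + 1) * (((N:ℚ) - (L:ℚ) + 1)/2)
              ≤ (∏ k ∈ Finset.range (N - L - 1), (((jv:ℚ) + (((k+1:ℕ)):ℚ) + 1) / ((((k+1:ℕ)):ℚ) + 1)))
                * ((jv:ℚ) + 1) := by
                rw [mul_comm]
                have hjq : 1 ≤ (jv:ℚ) := by exact_mod_cast hjv1
                have h2 : (0:ℚ) ≤ (jv:ℚ) + 1 := by linarith
                exact mul_le_mul_of_nonneg_right hrest h2
            _ = _ := by
                congr 1
                · apply Finset.prod_congr rfl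
                  intro k _
                  push_cast
                  ring_nf
                · push_cast
                  norm_num
      _ = ∏ k : Fin (N-L), (((jv:ℚ) + ((k:ℚ) + 1)) / ((k:ℚ) + 1)) := hconv.symm
      _ = _ := by
          apply Finset.prod_congr rfl
          intro k _
          exact (hstep k).symm
  -- disjointness
  have hd12 : Disjoint T1 T2 := by
    rw [Finset.disjoint_left]
    intro p hp1 hp2
    have h1 : (p.2 : ℕ) < L := (Finset.mem_filter.mp hp1).2
    obtain ⟨d, _, hd⟩ := Finset.mem_image.mp hp2
    have : (p.2 : ℕ) = L := by rw [← hd]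
    omega
  have hd123 : Disjoint (T1 ∪ T2) T3 := by
    rw [Finset.disjoint_left]
    intro p hp12 hp3
    obtain ⟨k, _, hk⟩ := Finset.mem_image.mp hp3
    have hk1 : (p.1 : ℕ) = L - 1 := by rw [← hk]
    have hk2 : (p.2 : ℕ) = L + (k:ℕ) := by rw [← hk]
    rcases Finset.mem_union.mp hp12 with h | h
    · have h1 : (p.2 : ℕ) < L := (Finset.mem_filter.mp h).2
      omega
    · obtain ⟨d, _, hd⟩ := Finset.mem_image.mp h
      have hdlt := d.isLt
      have : (p.1 : ℕ) = L - 2 - (d:ℕ) := by rw [← hd]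
      omega
  -- subset
  have hsub : (T1 ∪ T2) ∪ T3 ⊆ P := by
    intro p hp
    rcases Finset.mem_union.mp hp with h | h3
    · rcases Finset.mem_union.mp h with h1 | h2
      · exact Finset.mem_of_mem_filter p h1
      · obtain ⟨d, _, hd⟩ := Finset.mem_image.mp h2
        have hdlt := d.isLt
        rw [hP, Finset.mem_filter]
        refine ⟨Finset.mem_univ _, ?_⟩
        rw [← hd]
        simp only [Fin.mk_lt_mk]
        omega
    · obtain ⟨k, _, hk⟩ := Finset.mem_image.mp h3
      rw [hP, Finset.mem_filter]
      refine ⟨Finset.mem_univ _, ?_⟩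
      rw [← hk]
      simp only [hjI, Fin.mk_lt_mk]
      omega
  -- combine
  have hTP : ∏ p ∈ (T1 ∪ T2) ∪ T3, F p ≤ ∏ p ∈ P, F p := by
    have hone : (1:ℚ) ≤ ∏ p ∈ P \ ((T1 ∪ T2) ∪ T3), F p := by
      calc (1:ℚ) = ∏ _p ∈ P \ ((T1 ∪ T2) ∪ T3), (1:ℚ) := (Finset.prod_const_one).symm
        _ ≤ _ := Finset.prod_le_prod (fun _ _ => zero_le_one)
            (fun p hp => hFone p (Finset.mem_sdiff.mp hp).1)
    have hnn : (0:ℚ) ≤ ∏ p ∈ (T1 ∪ T2) ∪ T3, F p :=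
      Finset.prod_nonneg (fun p hp => le_trans zero_le_one (hFone p (hsub hp)))
    calc ∏ p ∈ (T1 ∪ T2) ∪ T3, F p = (∏ p ∈ (T1 ∪ T2) ∪ T3, F p) * 1 := by ring
      _ ≤ (∏ p ∈ (T1 ∪ T2) ∪ T3, F p) * ∏ p ∈ P \ ((T1 ∪ T2) ∪ T3), F p :=
          mul_le_mul_of_nonneg_left hone hnn
      _ = ∏ p ∈ P, F p := by rw [mul_comm]; exact Finset.prod_sdiff hsub
  have hsplit : ∏ p ∈ (T1 ∪ T2) ∪ T3, F p =
      (∏ p ∈ T1, F p) * (∏ p ∈ T2, F p) * (∏ p ∈ T3, F p) := by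
    rw [Finset.prod_union hd123, Finset.prod_union hd12]
  have hwd : weylDim N l = ∏ p ∈ P, F p := rfl
  have hd''1 : (1:ℚ) ≤ weylDim L l'' := by
    apply one_le_weylDim
    intro a b hab
    simp only [hl'']
    have : l (Fin.castLE hLN.le b) ≤ l (Fin.castLE hLN.le a) := hmono _ _ (by exact hab)
    omega
  have hjq : 1 ≤ (jv:ℚ) := by exact_mod_cast hjv1
  calc weylDim L l'' * ((jv:ℚ) + 1) * (((L:ℚ) + 1) * ((N:ℚ) - (L:ℚ) + 1) / 4)
      = weylDim L l'' * ((((L:ℚ) + 1)/2) * (((jv:ℚ) + 1) * (((N:ℚ) - (L:ℚ) + 1)/2))) := by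
        ring
    _ ≤ (∏ p ∈ T1, F p) * ((∏ p ∈ T2, F p) * (∏ p ∈ T3, F p)) := by
        rw [hprod1]
        apply mul_le_mul_of_nonneg_left _ (by linarith : (0:ℚ) ≤ weylDim L l'')
        apply mul_le_mul hprod2 hprod3
        · have hNL : (L:ℚ) ≤ (N:ℚ) := by exact_mod_cast hLN.le
          apply mul_nonneg (by linarith) (by linarith)
        · calc (0:ℚ) ≤ ((L:ℚ)+1)/2 := by positivity
            _ ≤ _ := hprod2
    _ = ∏ p ∈ (T1 ∪ T2) ∪ T3, F p := by rw [hsplit]; ring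
    _ ≤ ∏ p ∈ P, F p := hTP
    _ = weylDim N l := hwd.symm

open ENNReal

lemma shift_mem_SUWeight {N L : ℕ} {l : Fin N → ℤ} (hl : l ∈ SUWeight N)
    (hL1 : 1 ≤ L) (hLN : L < N)
    (hpos : ∀ i : Fin N, (i:ℕ) < L → 1 ≤ l i) :
    (fun i : Fin L => l (Fin.castLE hLN.le i) - l ⟨L-1, by omega⟩) ∈ SUWeight L := by
  obtain ⟨hmono, hnn, _⟩ := hl
  refine ⟨?_, ?_, ?_⟩
  · intro a b hab
    have h := hmono (Fin.castLE hLN.le a) (Fin.castLE hLN.le b) hab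
    dsimp only
    omega
  · intro i
    have hile : (Fin.castLE hLN.le i) ≤ (⟨L-1, by omega⟩ : Fin N) := by
      simp only [Fin.le_def, Fin.coe_castLE]
      have := i.isLt
      omega
    have h := hmono (Fin.castLE hLN.le i) ⟨L-1, by omega⟩ hile
    dsimp only
    omega
  · intro h
    have he : Fin.castLE hLN.le (⟨L-1, h⟩ : Fin L) = (⟨L-1, by omega⟩ : Fin N) := Fin.ext rfl
    show l (Fin.castLE hLN.le (⟨L-1, h⟩ : Fin L)) - l ⟨L-1, by omega⟩ = 0
    rw [he, sub_self]

noncomputable def ase (s : ℝ) : ℝ≥0∞ := ∑' n : ℕ, ENNReal.ofReal (((n:ℝ)+2) ^ (-s))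

lemma summable_aux {s : ℝ} (hs : 1 < s) : Summable (fun n : ℕ => ((n:ℝ)+2) ^ (-s)) := by
  have h0 : Summable (fun n : ℕ => ((n:ℝ)^s)⁻¹) := Real.summable_nat_rpow_inv.mpr hs
  have h1 : Summable ((fun n : ℕ => ((n:ℝ)^s)⁻¹) ∘ (fun n : ℕ => n + 2)) :=
    h0.comp_injective (add_left_injective 2)
  refine h1.congr fun n => ?_
  simp only [Function.comp_apply]
  rw [Real.rpow_neg (by positivity)]
  congr 2
  push_cast
  ring

lemma ase_lt_top {s : ℝ} (hs : 1 < s) : ase s < ⊤ := by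
  rw [ase, ← ENNReal.ofReal_tsum_of_nonneg (fun n => by positivity) (summable_aux hs)]
  exact ENNReal.ofReal_lt_top

lemma ase_eq {s : ℝ} : ase s = ∑' n : ℕ, ENNReal.ofReal (((n:ℝ)+2) ^ (-s)) := rfl

lemma suZeta_rec (s : ℝ) (hs : 0 < s) (N : ℕ) :
    suZeta N s ≤ 1 + ∑ L ∈ Finset.Ico 1 N,
      (ENNReal.ofReal (((((L:ℝ)+1) * ((N:ℝ)-(L:ℝ)+1)) / 4) ^ (-s)) * ase s) * suZeta L s := by
  classical
  set f : (SUWeight N) → ℝ≥0∞ := fun x => ENNReal.ofReal ((weylDim N x.1 : ℝ) ^ (-s)) with hf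
  have hz0 : (fun _ => 0 : Fin N → ℤ) ∈ SUWeight N := zero_mem_SUWeight N
  set z : (SUWeight N) := ⟨fun _ => 0, hz0⟩ with hzdef
  have hfz : f z = 1 := by
    simp only [hf, hzdef, weylDim_zero]
    rw [Rat.cast_one, Real.one_rpow, ENNReal.ofReal_one]
  have hsuz : suZeta N s = ∑' x : (SUWeight N), f x := rfl
  have hsz : ∑' x : (SUWeight N), f x
      = f z + ∑' x : (SUWeight N), (if x = z then 0 else f x) := by
    rw [ENNReal.tsum_eq_add_tsum_ite (f := f) z]
    congr 1
    apply tsum_congr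
    intro x
    split_ifs <;> rfl
  -- target sigma type
  set g : (Σ L : ℕ, ℕ × (SUWeight L)) → ℝ≥0∞ := fun b =>
    (if 1 ≤ b.1 ∧ b.1 < N then
        ENNReal.ofReal (((((b.1:ℝ)+1) * ((N:ℝ)-(b.1:ℝ)+1)) / 4) ^ (-s)) *
          ENNReal.ofReal (((b.2.1:ℝ)+2) ^ (-s))
      else 0) * ENNReal.ofReal ((weylDim b.1 (b.2.2 : Fin b.1 → ℤ) : ℝ) ^ (-s)) with hg
  have hdec : ∀ x : (SUWeight N), x.1 ≠ (fun _ => 0) →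
      ∃ L : ℕ, 1 ≤ L ∧ L < N ∧ (∀ i : Fin N, (i:ℕ) < L → 1 ≤ x.1 i) ∧
        (∀ i : Fin N, L ≤ (i:ℕ) → x.1 i = 0) :=
    fun x hx => SUWeight.decomp x.2 hx
  set e : (SUWeight N) → (Σ L : ℕ, ℕ × (SUWeight L)) := fun x =>
    if hx : x.1 = (fun _ => 0) then ⟨0, (0, ⟨(fun _ => 0), zero_mem_SUWeight 0⟩)⟩
    else
      ⟨(hdec x hx).choose,
        ((x.1 ⟨(hdec x hx).choose - 1, by
            have h := (hdec x hx).choose_spec; omega⟩ - 1).toNat,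
         ⟨fun i : Fin (hdec x hx).choose => x.1 (Fin.castLE (hdec x hx).choose_spec.2.1.le i)
            - x.1 ⟨(hdec x hx).choose - 1, by have h := (hdec x hx).choose_spec; omega⟩,
          shift_mem_SUWeight x.2 (hdec x hx).choose_spec.1 (hdec x hx).choose_spec.2.1
            (hdec x hx).choose_spec.2.2.1⟩)⟩ with he
  set zf : Fin N → ℤ := (fun _ => 0) with hzf
  set Λf : (Σ L : ℕ, ℕ × (SUWeight L)) → ℕ := fun b => b.1 with hΛf
  set Jf : (Σ L : ℕ, ℕ × (SUWeight L)) → ℕ := fun b => b.2.1 with hJf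
  set Vf : (Σ L : ℕ, ℕ × (SUWeight L)) → (ℕ → ℤ) := fun b n =>
    if h : n < b.1 then (b.2.2 : Fin b.1 → ℤ) ⟨n, h⟩ else 0 with hVf
  -- injectivity
  have hinj : Function.Injective e := by
    intro x y hxy
    by_cases hx : x.1 = (fun _ => 0)
    · by_cases hy : y.1 = (fun _ => 0)
      · exact Subtype.ext (hx.trans hy.symm)
      · exfalso
        have h1 := congrArg Λf hxy
        have h2 := (hdec y hy).choose_spec.1
        simp only [hΛf, he, dif_pos hx, dif_neg hy] at h1
        omega
    · by_cases hy : y.1 = (fun _ => 0)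
      · exfalso
        have h1 := congrArg Λf hxy
        have h2 := (hdec x hx).choose_spec.1
        simp only [hΛf, he, dif_pos hy, dif_neg hx] at h1
        omega
      · obtain ⟨hx1, hxN, hxpos, hxzero⟩ := (hdec x hx).choose_spec
        obtain ⟨hy1, hyN, hypos, hyzero⟩ := (hdec y hy).choose_spec
        have hL : (hdec x hx).choose = (hdec y hy).choose := by
          have h1 := congrArg Λf hxy
          simpa only [hΛf, he, dif_neg hx, dif_neg hy] using h1
        have hJxy := congrArg Jf hxy
        simp only [hJf, he, dif_neg hx, dif_neg hy] at hJxy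
        have hVxy := congrArg Vf hxy
        simp only [hVf, he, dif_neg hx, dif_neg hy] at hVxy
        have hjx1 : 1 ≤ x.1 ⟨(hdec x hx).choose - 1, by omega⟩ := hxpos _ (by
          simp only [Fin.val_mk]; omega)
        have hjy1 : 1 ≤ y.1 ⟨(hdec y hy).choose - 1, by omega⟩ := hypos _ (by
          simp only [Fin.val_mk]; omega)
        have hjeq : x.1 ⟨(hdec x hx).choose - 1, by omega⟩
            = y.1 ⟨(hdec y hy).choose - 1, by omega⟩ := by omega
        refine Subtype.ext (funext fun i => ?_)
        by_cases hi : (i:ℕ) < (hdec x hx).choose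
        · have h1 := congrFun hVxy (i:ℕ)
          rw [dif_pos hi, dif_pos (hL ▸ hi)] at h1
          have hcx : Fin.castLE hxN.le (⟨(i:ℕ), hi⟩ : Fin (hdec x hx).choose) = i :=
            Fin.ext rfl
          have hcy : Fin.castLE hyN.le (⟨(i:ℕ), hL ▸ hi⟩ : Fin (hdec y hy).choose) = i :=
            Fin.ext rfl
          simp only [hcx, hcy] at h1
          omega
        · have hax := hxzero i (by omega)
          have hay := hyzero i (by omega)
          rw [hax, hay]
  -- pointwise bound
  have hpb : ∀ x : (SUWeight N), (if x = z then 0 else f x) ≤ g (e x) := by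
    intro x
    split
    · exact zero_le
    · rename_i hxz
      have hx : x.1 ≠ (fun _ => 0) := fun h => hxz (Subtype.ext (by rw [h]))
      obtain ⟨hx1, hxN, hxpos, hxzero⟩ := (hdec x hx).choose_spec
      have hjlt : (hdec x hx).choose - 1 < N := by omega
      set jv : ℤ := x.1 ⟨(hdec x hx).choose - 1, hjlt⟩ with hjv
      have hjv1 : 1 ≤ jv := hxpos _ (by simp only [Fin.val_mk]; omega)
      set Lx := (hdec x hx).choose with hLxd
      have hgex : g (e x) =
          (ENNReal.ofReal (((((Lx:ℝ)+1) * ((N:ℝ)-(Lx:ℝ)+1)) / 4) ^ (-s)) *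
            ENNReal.ofReal ((((jv - 1).toNat : ℝ)+2) ^ (-s))) *
          ENNReal.ofReal ((weylDim Lx
            (fun i : Fin Lx => x.1 (Fin.castLE hxN.le i) - jv) : ℝ) ^ (-s)) := by
        simp only [he, dif_neg hx, hg]
        rw [if_pos ⟨hx1, hxN⟩]
      have hkey := weylDim_key x.1 x.2.1 hx1 hxN hxpos hxzero
      have hwd1 : (1:ℚ) ≤ weylDim Lx (fun i : Fin Lx => x.1 (Fin.castLE hxN.le i) - jv) := by
        apply one_le_weylDim
        intro a b hab
        have h := x.2.1 (Fin.castLE hxN.le a) (Fin.castLE hxN.le b) hab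
        omega
      have hwdN : (1:ℚ) ≤ weylDim N x.1 := one_le_weylDim _ x.2.1
      have hkeyR : ((weylDim Lx (fun i : Fin Lx => x.1 (Fin.castLE hxN.le i) - jv) : ℚ) : ℝ)
          * (((jv:ℤ):ℝ) + 1) * ((((Lx:ℝ)+1) * ((N:ℝ)-(Lx:ℝ)+1)) / 4)
          ≤ ((weylDim N x.1 : ℚ) : ℝ) := by
        have h' := Rat.cast_le (K := ℝ).mpr hkey
        push_cast at h' ⊢
        convert h' using 2
      set dL : ℝ := ((weylDim Lx (fun i : Fin Lx => x.1 (Fin.castLE hxN.le i) - jv) : ℚ) : ℝ)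
        with hdL
      set bv : ℝ := ((jv:ℤ):ℝ) + 1 with hbv
      set cv : ℝ := (((Lx:ℝ)+1) * ((N:ℝ)-(Lx:ℝ)+1)) / 4 with hcv
      have hdL1 : (1:ℝ) ≤ dL := by rw [hdL]; exact_mod_cast hwd1
      have hbv1 : (1:ℝ) ≤ bv := by
        rw [hbv]
        have : (1:ℝ) ≤ ((jv:ℤ):ℝ) := by exact_mod_cast hjv1
        linarith
      have hcv1 : (1:ℝ) ≤ cv := by
        rw [hcv]
        have h1 : (1:ℝ) ≤ (Lx:ℝ) := by exact_mod_cast hx1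
        have h2 : (Lx:ℝ) + 1 ≤ (N:ℝ) := by exact_mod_cast hxN
        nlinarith
      have hdNpos : (0:ℝ) < dL * bv * cv :=
        mul_pos (mul_pos (by linarith) (by linarith)) (by linarith)
      have hr1 : ((weylDim N x.1 : ℚ) : ℝ) ^ (-s) ≤ (dL * bv * cv) ^ (-s) :=
        Real.rpow_le_rpow_of_nonpos hdNpos hkeyR (by linarith)
      have hr2 : (dL * bv * cv) ^ (-s) = cv ^ (-s) * bv ^ (-s) * dL ^ (-s) := by
        rw [Real.mul_rpow (by nlinarith) (by linarith),
            Real.mul_rpow (by linarith) (by linarith)]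
        ring
      have hbjj : (((jv - 1).toNat : ℕ) : ℝ) + 2 = bv := by
        have h1 : ((jv - 1).toNat : ℤ) = jv - 1 := Int.toNat_of_nonneg (by omega)
        have h2 : (((jv - 1).toNat : ℕ) : ℝ) = ((jv:ℤ):ℝ) - 1 := by exact_mod_cast h1
        rw [h2, hbv]; ring
      rw [hgex, hf]
      have hc0 : (0:ℝ) ≤ cv ^ (-s) := Real.rpow_nonneg (by linarith) _
      have hb0 : (0:ℝ) ≤ bv ^ (-s) := Real.rpow_nonneg (by linarith) _
      rw [show (((jv - 1).toNat : ℕ) : ℝ) + 2 = bv from hbjj]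
      rw [← ENNReal.ofReal_mul hc0, ← ENNReal.ofReal_mul (mul_nonneg hc0 hb0)]
      apply ENNReal.ofReal_le_ofReal
      calc ((weylDim N x.1 : ℚ):ℝ) ^ (-s) ≤ (dL * bv * cv) ^ (-s) := hr1
        _ = cv ^ (-s) * bv ^ (-s) * dL ^ (-s) := hr2
  -- sum computation
  have hsig : ∑' b : (Σ L : ℕ, ℕ × (SUWeight L)), g b
      = ∑' (L : ℕ), ∑' (p : ℕ × (SUWeight L)),
        (if 1 ≤ L ∧ L < N then
            ENNReal.ofReal (((((L:ℝ)+1) * ((N:ℝ)-(L:ℝ)+1)) / 4) ^ (-s)) *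
              ENNReal.ofReal (((p.1:ℝ)+2) ^ (-s))
          else 0) * ENNReal.ofReal ((weylDim L (p.2 : Fin L → ℤ) : ℝ) ^ (-s)) := by
    rw [hg]
    exact ENNReal.tsum_sigma (fun (L : ℕ) (p : ℕ × (SUWeight L)) =>
      (if 1 ≤ L ∧ L < N then
          ENNReal.ofReal (((((L:ℝ)+1) * ((N:ℝ)-(L:ℝ)+1)) / 4) ^ (-s)) *
            ENNReal.ofReal (((p.1:ℝ)+2) ^ (-s))
        else 0) * ENNReal.ofReal ((weylDim L (p.2 : Fin L → ℤ) : ℝ) ^ (-s)))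
  have hLsum : ∀ L : ℕ,
      (∑' (p : ℕ × (SUWeight L)),
        (if 1 ≤ L ∧ L < N then
            ENNReal.ofReal (((((L:ℝ)+1) * ((N:ℝ)-(L:ℝ)+1)) / 4) ^ (-s)) *
              ENNReal.ofReal (((p.1:ℝ)+2) ^ (-s))
          else 0) * ENNReal.ofReal ((weylDim L (p.2 : Fin L → ℤ) : ℝ) ^ (-s)))
      = if 1 ≤ L ∧ L < N then
          (ENNReal.ofReal (((((L:ℝ)+1) * ((N:ℝ)-(L:ℝ)+1)) / 4) ^ (-s)) * ase s) * suZeta L s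
        else 0 := by
    intro L
    by_cases hL : 1 ≤ L ∧ L < N
    · rw [if_pos hL]
      set q : ℝ≥0∞ := ENNReal.ofReal (((((L:ℝ)+1) * ((N:ℝ)-(L:ℝ)+1)) / 4) ^ (-s)) with hq
      rw [ENNReal.tsum_prod (f := fun (jj : ℕ) (y : (SUWeight L)) =>
        (if 1 ≤ L ∧ L < N then q * ENNReal.ofReal (((jj:ℝ)+2) ^ (-s)) else 0) *
          ENNReal.ofReal ((weylDim L (y : Fin L → ℤ) : ℝ) ^ (-s)))]
      have h1 : ∀ jj : ℕ,
          (∑' y : (SUWeight L), (if 1 ≤ L ∧ L < N then q * ENNReal.ofReal (((jj:ℝ)+2) ^ (-s)) else 0)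
            * ENNReal.ofReal ((weylDim L (y : Fin L → ℤ) : ℝ) ^ (-s)))
          = (q * suZeta L s) * ENNReal.ofReal (((jj:ℝ)+2) ^ (-s)) := by
        intro jj
        rw [if_pos hL]
        rw [ENNReal.tsum_mul_left]
        show (q * ENNReal.ofReal (((jj:ℝ)+2) ^ (-s))) * suZeta L s = _
        ring
      rw [tsum_congr h1, ENNReal.tsum_mul_left]
      show (q * suZeta L s) * ase s = (q * ase s) * suZeta L s
      ring
    · rw [if_neg hL]
      simp only [if_neg hL, zero_mul, tsum_zero]
  have hfinal : ∑' b : (Σ L : ℕ, ℕ × (SUWeight L)), g b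
      = ∑ L ∈ Finset.Ico 1 N,
        (ENNReal.ofReal (((((L:ℝ)+1) * ((N:ℝ)-(L:ℝ)+1)) / 4) ^ (-s)) * ase s) * suZeta L s := by
    rw [hsig, tsum_congr hLsum]
    rw [tsum_eq_sum (s := Finset.Ico 1 N) (fun L hL => by
      rw [if_neg]; intro hc; exact hL (Finset.mem_Ico.mpr ⟨hc.1, hc.2⟩))]
    refine Finset.sum_congr rfl fun L hL => ?_
    rw [if_pos]
    obtain ⟨h1, h2⟩ := Finset.mem_Ico.mp hL
    exact ⟨h1, h2⟩
  rw [hsuz, hsz, hfz, ← hfinal]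
  refine add_le_add le_rfl ?_
  refine le_trans (ENNReal.summable.tsum_le_tsum hpb ENNReal.summable) ?_
  exact ENNReal.tsum_comp_le_tsum_of_injective hinj g

noncomputable def cseq (s : ℝ) (N : ℕ) : ℝ≥0∞ :=
  (∑ L ∈ Finset.Ico 1 N, ENNReal.ofReal (((((L:ℝ)+1) * ((N:ℝ)-(L:ℝ)+1)) / 4) ^ (-s))) * ase s

lemma cseq_def (s : ℝ) (N : ℕ) : cseq s N =
    (∑ L ∈ Finset.Ico 1 N, ENNReal.ofReal (((((L:ℝ)+1) * ((N:ℝ)-(L:ℝ)+1)) / 4) ^ (-s))) * ase s :=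
  rfl

lemma suZeta_le_prod (s : ℝ) (hs : 1 < s) :
    ∀ N : ℕ, suZeta N s ≤ ∏ m ∈ Finset.Icc 2 N, (1 + cseq s m) := by
  intro N
  induction N using Nat.strong_induction_on with
  | _ N ih =>
    have hrec := suZeta_rec s (by linarith) N
    by_cases hN2 : 2 ≤ N
    · have hPP1 : (1:ℝ≥0∞) ≤ ∏ m ∈ Finset.Icc 2 (N-1), (1 + cseq s m) :=
        Finset.one_le_prod' (fun m _ => le_add_right le_rfl)
      have hstep : ∀ L ∈ Finset.Ico 1 N,
          suZeta L s ≤ ∏ m ∈ Finset.Icc 2 (N-1), (1 + cseq s m) := by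
        intro L hL
        obtain ⟨h1, h2⟩ := Finset.mem_Ico.mp hL
        refine le_trans (ih L h2) ?_
        refine Finset.prod_le_prod_of_subset_of_one_le'
          (Finset.Icc_subset_Icc_right (by omega)) (fun m _ _ => le_add_right le_rfl)
      calc suZeta N s
          ≤ 1 + ∑ L ∈ Finset.Ico 1 N,
            (ENNReal.ofReal (((((L:ℝ)+1) * ((N:ℝ)-(L:ℝ)+1)) / 4) ^ (-s)) * ase s)
              * suZeta L s := hrec
        _ ≤ 1 + ∑ L ∈ Finset.Ico 1 N,
            (ENNReal.ofReal (((((L:ℝ)+1) * ((N:ℝ)-(L:ℝ)+1)) / 4) ^ (-s)) * ase s)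
              * ∏ m ∈ Finset.Icc 2 (N-1), (1 + cseq s m) := by
            refine add_le_add le_rfl (Finset.sum_le_sum fun L hL => ?_)
            exact mul_le_mul_right (hstep L hL) _
        _ = 1 + cseq s N * ∏ m ∈ Finset.Icc 2 (N-1), (1 + cseq s m) := by
            rw [cseq_def, Finset.sum_mul, Finset.sum_mul]
        _ ≤ (1 + cseq s N) * ∏ m ∈ Finset.Icc 2 (N-1), (1 + cseq s m) := by
            rw [add_mul, one_mul]
            exact add_le_add hPP1 le_rfl
        _ = ∏ m ∈ Finset.Icc 2 N, (1 + cseq s m) := by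
            have hps := Finset.prod_Icc_succ_top (a := 2) (b := N-1)
              (by omega) (fun m => 1 + cseq s m)
            have hN1 : N - 1 + 1 = N := by omega
            rw [hN1] at hps
            rw [hps]
            ring
    · have hempty : Finset.Ico 1 N = ∅ := Finset.Ico_eq_empty (by omega)
      rw [hempty, Finset.sum_empty, add_zero] at hrec
      exact le_trans hrec (Finset.one_le_prod' (fun m _ => le_add_right le_rfl))

lemma real_split (a b : ℕ) (s : ℝ) :
    ((((a:ℝ)+2) * ((b:ℝ)+2) / 4) ^ (-s))
      = (((a:ℝ)+2) ^ (-s)) * (((b:ℝ)+2) ^ (-s)) * ((4:ℝ) ^ s) := by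
  rw [Real.div_rpow (by positivity) (by norm_num),
      Real.mul_rpow (by positivity) (by positivity),
      Real.rpow_neg (by norm_num : (0:ℝ) ≤ 4), div_eq_mul_inv, inv_inv]

lemma cseq_tsum_lt_top (s : ℝ) (hs : 1 < s) : ∑' m : ℕ, cseq s m < ⊤ := by
  classical
  set W : ℕ × ℕ → ℝ≥0∞ := fun p =>
    if 1 ≤ p.2 ∧ p.2 < p.1 then
      ENNReal.ofReal (((((p.2:ℝ)+1) * ((p.1:ℝ)-(p.2:ℝ)+1)) / 4) ^ (-s)) else 0 with hW
  have hm : ∀ m : ℕ, cseq s m = (∑' L : ℕ, W (m, L)) * ase s := by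
    intro m
    rw [cseq_def]
    congr 1
    rw [tsum_eq_sum (s := Finset.Ico 1 m) (f := fun L => W (m, L)) (fun L hL => by
      simp only [hW]
      rw [if_neg]
      intro hc
      exact hL (Finset.mem_Ico.mpr hc))]
    refine Finset.sum_congr rfl fun L hL => ?_
    simp only [hW]
    rw [if_pos (Finset.mem_Ico.mp hL)]
  set V : ℕ × ℕ × ℕ → ℝ≥0∞ := fun t =>
    if t.1 = 0 then
      ENNReal.ofReal (((((t.2.1:ℝ)+2) * ((t.2.2:ℝ)+2)) / 4) ^ (-s)) else 0 with hV
  set ψ : ℕ × ℕ → ℕ × ℕ × ℕ := fun p =>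
    if 1 ≤ p.2 ∧ p.2 < p.1 then (0, (p.2 - 1, p.1 - p.2 - 1)) else (1, p) with hψ
  have hψinj : Function.Injective ψ := by
    intro p q hpq
    simp only [hψ] at hpq
    by_cases hp : 1 ≤ p.2 ∧ p.2 < p.1 <;> by_cases hq : 1 ≤ q.2 ∧ q.2 < q.1
    · rw [if_pos hp, if_pos hq] at hpq
      have h1 : p.2 - 1 = q.2 - 1 := congrArg (fun t => t.2.1) hpq
      have h2 : p.1 - p.2 - 1 = q.1 - q.2 - 1 := congrArg (fun t => t.2.2) hpq
      have := Prod.ext_iff.mp (rfl : p = p)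
      refine Prod.ext ?_ ?_ <;> omega
    · rw [if_pos hp, if_neg hq] at hpq
      have h0 : (0:ℕ) = 1 := congrArg (fun t => t.1) hpq
      omega
    · rw [if_neg hp, if_pos hq] at hpq
      have h0 : (1:ℕ) = 0 := congrArg (fun t => t.1) hpq
      omega
    · rw [if_neg hp, if_neg hq] at hpq
      exact congrArg (fun t => t.2) hpq
  have hWV : ∀ p : ℕ × ℕ, W p ≤ V (ψ p) := by
    intro p
    by_cases hp : 1 ≤ p.2 ∧ p.2 < p.1
    · have h1 : ((p.2 - 1 : ℕ):ℝ) + 2 = (p.2:ℝ) + 1 := by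
        have := hp.1
        push_cast [Nat.cast_sub this]
        ring
      have h2 : ((p.1 - p.2 - 1 : ℕ):ℝ) + 2 = (p.1:ℝ) - (p.2:ℝ) + 1 := by
        have h3 : (p.1 - p.2 - 1) + (p.2 + 1) = p.1 := by omega
        have h5 := congrArg (fun n : ℕ => (n:ℝ)) h3
        push_cast at h5
        linarith
      simp only [hW, hψ]
      rw [if_pos hp, if_pos hp, hV]
      simp only [if_true, h1, h2]
      exact le_rfl
    · simp only [hW]
      rw [if_neg hp]
      exact zero_le
  have hVsum : ∑' t : ℕ × ℕ × ℕ, V t = (ase s * (ase s * ENNReal.ofReal ((4:ℝ) ^ s))) := by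
    rw [ENNReal.tsum_prod (f := fun i q => V (i, q))]
    rw [tsum_eq_sum (s := ({0} : Finset ℕ)) (f := fun i => ∑' q : ℕ × ℕ, V (i, q))
      (fun i hi => by
        have : i ≠ 0 := by simpa using hi
        simp only [hV]
        rw [ENNReal.summable.tsum_eq_zero_iff |>.mpr]
        intro q
        rw [if_neg this]
        )]
    rw [Finset.sum_singleton]
    rw [ENNReal.tsum_prod (f := fun a b => V (0, (a, b)))]
    have hab : ∀ a b : ℕ, V (0, (a, b)) =
        ENNReal.ofReal (((a:ℝ)+2) ^ (-s)) *
          (ENNReal.ofReal (((b:ℝ)+2) ^ (-s)) * ENNReal.ofReal ((4:ℝ) ^ s)) := by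
      intro a b
      simp only [hV, if_true]
      rw [real_split a b s, ENNReal.ofReal_mul (by positivity),
          ENNReal.ofReal_mul (by positivity)]
      ring
    calc ∑' (a : ℕ) (b : ℕ), V (0, (a, b))
        = ∑' (a : ℕ), ENNReal.ofReal (((a:ℝ)+2) ^ (-s)) *
            (ase s * ENNReal.ofReal ((4:ℝ) ^ s)) := by
          refine tsum_congr fun a => ?_
          rw [tsum_congr (hab a), ENNReal.tsum_mul_left, ase_eq, ENNReal.tsum_mul_right]
      _ = ase s * (ase s * ENNReal.ofReal ((4:ℝ) ^ s)) := by
          rw [ENNReal.tsum_mul_right, ase_eq]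
  have hfin : ∑' m : ℕ, cseq s m
      ≤ (ase s * (ase s * ENNReal.ofReal ((4:ℝ) ^ s))) * ase s := by
    calc ∑' m : ℕ, cseq s m = (∑' m : ℕ, ∑' L : ℕ, W (m, L)) * ase s := by
          rw [← ENNReal.tsum_mul_right]
          exact tsum_congr hm
      _ = (∑' p : ℕ × ℕ, W p) * ase s := by
          rw [ENNReal.tsum_prod (f := fun m L => W (m, L))]
      _ ≤ (∑' t : ℕ × ℕ × ℕ, V t) * ase s := by
          refine mul_le_mul_left ?_ _
          refine le_trans (ENNReal.summable.tsum_le_tsum hWV ENNReal.summable) ?_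
          exact ENNReal.tsum_comp_le_tsum_of_injective hψinj V
      _ = _ := by rw [hVsum]
  refine lt_of_le_of_lt hfin ?_
  have hase := ase_lt_top hs
  exact ENNReal.mul_lt_top (ENNReal.mul_lt_top hase
    (ENNReal.mul_lt_top hase ENNReal.ofReal_lt_top)) hase

/-- For every real `s > 1`, the supremum over all integers `N ≥ 2` of `ζ_{SU(N)}(s)`
is finite. -/
theorem suZeta_iSup_lt_top (s : ℝ) (hs : 1 < s) :
    (⨆ N : {n : ℕ // 2 ≤ n}, suZeta N s) < ⊤ := by
  have hS := cseq_tsum_lt_top s hs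
  set S : ℝ≥0∞ := ∑' m : ℕ, cseq s m with hSdef
  have hcne : ∀ m : ℕ, cseq s m ≠ ⊤ := fun m => ((ENNReal.le_tsum m).trans_lt hS).ne
  have hbound : ∀ N : ℕ, ∏ m ∈ Finset.Icc 2 N, (1 + cseq s m)
      ≤ ENNReal.ofReal (Real.exp S.toReal) := by
    intro N
    have h1 : ∀ m ∈ Finset.Icc 2 N,
        (1 + cseq s m) = ENNReal.ofReal (1 + (cseq s m).toReal) := by
      intro m _
      rw [ENNReal.ofReal_add zero_le_one ENNReal.toReal_nonneg, ENNReal.ofReal_one,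
          ENNReal.ofReal_toReal (hcne m)]
    rw [Finset.prod_congr rfl h1, ← ENNReal.ofReal_prod_of_nonneg
      (fun m _ => by positivity)]
    apply ENNReal.ofReal_le_ofReal
    calc ∏ m ∈ Finset.Icc 2 N, (1 + (cseq s m).toReal)
        ≤ ∏ m ∈ Finset.Icc 2 N, Real.exp ((cseq s m).toReal) :=
          Finset.prod_le_prod (fun m _ => by positivity)
            (fun m _ => by linarith [Real.add_one_le_exp ((cseq s m).toReal)])
      _ = Real.exp (∑ m ∈ Finset.Icc 2 N, (cseq s m).toReal) := (Real.exp_sum _ _).symm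
      _ ≤ Real.exp S.toReal := by
          apply Real.exp_le_exp.mpr
          rw [← ENNReal.toReal_sum (fun m _ => hcne m)]
          exact ENNReal.toReal_mono hS.ne (ENNReal.sum_le_tsum _)
  exact lt_of_le_of_lt
    (iSup_le fun N => le_trans (suZeta_le_prod s hs N.1) (hbound N.1))
    ENNReal.ofReal_lt_top
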